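/- Let B be a simple bipartite graph with bipartition V(B) = W ⊎ U, G its half-square, D = (T, β_D) a nice tree decomposition of B, and D' = (T, β_{D'}) the derived decomposition of G. Let s ∈ U and let t be a node of T that is an introduce(s) node of D, with unique child t'. Then Original(t) = Original(t') and Fake(t) = Fake(t'). -/

import Mathlib

open SimpleGraph

section Defs

variable {V : Type*} {ι : Type*}

/-- `W, U` is a bipartition of the simple graph `B`. -/
def IsBipartition (B : SimpleGraph V) (W U : Set V) : Prop :=
  (∀ v, v ∈ W ∨ v ∈ U) ∧ (∀ v, ¬(v ∈ W ∧ v ∈ U)) ∧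
    ∀ ⦃a b⦄, B.Adj a b → (a ∈ W ∧ b ∈ U) ∨ (a ∈ U ∧ b ∈ W)

/-- The half-square of `B` on side `W`: two distinct vertices of `W` are adjacent
iff they have a common neighbor in `B`. -/
def halfSquare (B : SimpleGraph V) (W : Set V) : SimpleGraph V where
  Adj a b := a ≠ b ∧ a ∈ W ∧ b ∈ W ∧ ∃ s, B.Adj a s ∧ B.Adj b s
  symm := by
    constructor
    rintro a b ⟨hne, ha, hb, s, h1, h2⟩
    exact ⟨hne.symm, hb, ha, s, h2, h1⟩
  loopless := by constructor; rintro a ⟨hne, _⟩; exact hne rfl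

/-- Tree decomposition of the graph `H` with vertex set `S`, over the tree `T`. -/
structure IsTreeDecompOn (H : SimpleGraph V) (S : Set V) (T : SimpleGraph ι)
    (β : ι → Set V) : Prop where
  covers : ∀ v ∈ S, ∃ t, v ∈ β t
  edge_mem : ∀ ⦃u v⦄, H.Adj u v → ∃ t, u ∈ β t ∧ v ∈ β t
  conn : ∀ v ∈ S, (T.induce {t | v ∈ β t}).Connected

/-- `t'` is a descendant of `t` (inclusively) in the tree `T` rooted at `r`:
`t` lies on every path from `t'` to the root. -/
def Desc (T : SimpleGraph ι) (r : ι) (t t' : ι) : Prop :=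
  ∀ p : T.Walk t' r, p.IsPath → t ∈ p.support

/-- `γ(t)`: union of the bags of `t` and of all its descendants. -/
def gammaSet (T : SimpleGraph ι) (r : ι) (β : ι → Set V) (t : ι) : Set V :=
  ⋃ t' ∈ {t' | Desc T r t t'}, β t'

/-- The bag of the derived decomposition. -/
def derivedBag (B : SimpleGraph V) (W U : Set V) (T : SimpleGraph ι) (r : ι)
    (β : ι → Set V) (t : ι) : Set V :=
  (β t ∩ W) ∪ ⋃ s ∈ β t ∩ U, B.neighborSet s ∩ gammaSet T r β t

def originalSet (B : SimpleGraph V) (W U : Set V) (T : SimpleGraph ι) (r : ι)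
    (β : ι → Set V) (t : ι) : Set V :=
  β t ∩ derivedBag B W U T r β t

def fakeSet (B : SimpleGraph V) (W U : Set V) (T : SimpleGraph ι) (r : ι)
    (β : ι → Set V) (t : ι) : Set V :=
  derivedBag B W U T r β t \ β t

def cliquesAt (B : SimpleGraph V) (U : Set V) (β : ι → Set V) (t : ι) : Set (Set V) :=
  {K | ∃ s ∈ β t ∩ U, K = B.neighborSet s}

def IsChild (T : SimpleGraph ι) (r : ι) (t t' : ι) : Prop :=
  T.Adj t t' ∧ Desc T r t t'

def IsLeafNode (T : SimpleGraph ι) (r : ι) (β : ι → Set V) (t : ι) : Prop :=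
  (∀ t', ¬ IsChild T r t t') ∧ β t = ∅

def IsForgetNode (T : SimpleGraph ι) (r : ι) (β : ι → Set V) (w : V) (t : ι) : Prop :=
  ∃ t', IsChild T r t t' ∧ (∀ t'', IsChild T r t t'' → t'' = t') ∧
    w ∈ β t' ∧ β t = β t' \ {w}

def IsIntroduceNode (T : SimpleGraph ι) (r : ι) (β : ι → Set V) (w : V) (t : ι) : Prop :=
  ∃ t', IsChild T r t t' ∧ (∀ t'', IsChild T r t t'' → t'' = t') ∧
    w ∈ β t ∧ β t \ {w} = β t'

def IsJoinNode (T : SimpleGraph ι) (r : ι) (β : ι → Set V) (t : ι) : Prop :=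
  ∃ t₁ t₂, t₁ ≠ t₂ ∧ IsChild T r t t₁ ∧ IsChild T r t t₂ ∧
    (∀ t'', IsChild T r t t'' → t'' = t₁ ∨ t'' = t₂) ∧ β t = β t₁ ∧ β t = β t₂

/-- A nice (rooted) tree decomposition. -/
def IsNice (T : SimpleGraph ι) (r : ι) (β : ι → Set V) : Prop :=
  β r = ∅ ∧ ∀ t, IsLeafNode T r β t ∨ (∃ w, IsForgetNode T r β w t) ∨
    (∃ w, IsIntroduceNode T r β w t) ∨ IsJoinNode T r β t

/-- `E(X)`: edges of `G` with both endpoints in `X`. -/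
def edgesIn (G : SimpleGraph V) (X : Set V) : Set (Sym2 V) :=
  {e | e ∈ G.edgeSet ∧ ∀ x ∈ e, x ∈ X}

end Defs


section Aux
open SimpleGraph Walk

variable {V : Type*} {ι : Type*}

private lemma desc_refl' {T : SimpleGraph ι} {r t : ι} : Desc T r t t :=
  fun p _ => p.start_mem_support

private lemma desc_trans' {T : SimpleGraph ι} {r a b c : ι} [DecidableEq ι]
    (hab : Desc T r a b) (hbc : Desc T r b c) : Desc T r a c := by
  intro p hp
  have hb : b ∈ p.support := hbc p hp
  exact p.support_dropUntil_subset hb (hab (p.dropUntil b hb) (hp.dropUntil hb))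

private lemma mem_take_drop' {T : SimpleGraph ι} [DecidableEq ι] {a x u v : ι}
    {p : T.Walk u v} (hp : p.IsPath) (ha : a ∈ p.support)
    (h1 : x ∈ (p.takeUntil a ha).support) (h2 : x ∈ (p.dropUntil a ha).support) : x = a := by
  by_contra hne
  have hsupp : p.support = (p.takeUntil a ha).support ++ (p.dropUntil a ha).support.tail := by
    rw [← support_append, take_spec]
  have hnd := hp.support_nodup
  rw [hsupp] at hnd
  have hdisj := (List.nodup_append'.mp hnd).2.2
  have : x ∈ (p.dropUntil a ha).support.tail := by
    have hc := (p.dropUntil a ha).support_eq_cons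
    rw [hc] at h2
    rcases List.mem_cons.mp h2 with h2 | h2
    · exact absurd h2 hne
    · exact h2
  exact hdisj h1 this

private lemma desc_antisymm' {T : SimpleGraph ι} [DecidableEq ι] {r a b : ι}
    (hT : T.IsTree) (hab : Desc T r a b) (hba : Desc T r b a) : a = b := by
  obtain ⟨p, hp, -⟩ := hT.existsUnique_path b r
  have ha : a ∈ p.support := hab p hp
  have hbq : b ∈ (p.dropUntil a ha).support := hba _ (hp.dropUntil ha)
  have hbt : b ∈ (p.takeUntil a ha).support := (p.takeUntil a ha).start_mem_support
  exact (mem_take_drop' hp ha hbt hbq).symm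

private lemma sep' {T : SimpleGraph ι} [DecidableEq ι] {r t a b : ι}
    (hx : Desc T r t a) (hy : ¬ Desc T r t b) (w : T.Walk a b) : t ∈ w.support := by
  simp only [Desc, not_forall] at hy
  obtain ⟨py, hpy, htpy⟩ := hy
  have hz := hx (w.append py).bypass (w.append py).bypass_isPath
  have := (w.append py).support_bypass_subset hz
  rcases (mem_support_append_iff _ _).mp this with h | h
  · exact h
  · exact absurd h htpy

private lemma desc_cases' {T : SimpleGraph ι} [DecidableEq ι] {r t t' t'' : ι}
    (hT : T.IsTree) (huniq : ∀ u, IsChild T r t u → u = t')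
    (h : Desc T r t t'') : t'' = t ∨ Desc T r t' t'' := by
  by_cases heq : t'' = t
  · exact Or.inl heq
  right
  intro q hq
  have htq : t ∈ q.support := h q hq
  set q1 := q.takeUntil t htq with hq1def
  have hq1 : q1.IsPath := hq.takeUntil htq
  cases hrev : q1.reverse with
  | nil => exact absurd rfl heq
  | @cons _ c _ hadj p' =>
    have hcq1 : c ∈ q1.support := by
      have : c ∈ q1.reverse.support := by rw [hrev]; simp
      rwa [support_reverse, List.mem_reverse] at this
    have hct : c ≠ t := hadj.ne'
    have hcdrop : c ∉ (q.dropUntil t htq).support := fun hc =>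
      hct (mem_take_drop' hq htq hcq1 hc)
    have hw : (Walk.cons hadj.symm (q.dropUntil t htq)).IsPath :=
      (hq.dropUntil htq).cons hcdrop
    have hdesc : Desc T r t c := by
      intro z hz
      obtain ⟨p0, -, hu⟩ := hT.existsUnique_path c r
      have hz0 : z = Walk.cons hadj.symm (q.dropUntil t htq) := by
        rw [hu z hz, hu _ hw]
      rw [hz0]
      simp [Walk.support_cons]
    have : c = t' := huniq c ⟨hadj, hdesc⟩
    rw [← this]
    exact q.support_takeUntil_subset htq hcq1

private lemma exists_walk_in_bags' {B : SimpleGraph V} {T : SimpleGraph ι} {β : ι → Set V}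
    (hD : IsTreeDecompOn B Set.univ T β) (v : V)
    {t₁ t₀ : ι} (h1 : v ∈ β t₁) (h0 : v ∈ β t₀) :
    ∃ w : T.Walk t₁ t₀, ∀ x ∈ w.support, v ∈ β x := by
  have hconn := hD.conn v (Set.mem_univ v)
  obtain ⟨w⟩ := hconn.preconnected ⟨t₁, h1⟩ ⟨t₀, h0⟩
  refine ⟨w.map ⟨Subtype.val, fun h => h⟩, ?_⟩
  intro x hx
  rw [Walk.support_map, List.mem_map] at hx
  obtain ⟨⟨y, hy⟩, -, rfl⟩ := hx
  exact hy

private lemma mem_derivedBag' {B : SimpleGraph V} {W U : Set V} {T : SimpleGraph ι}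
    {r : ι} {β : ι → Set V} {x : ι} {v : V} :
    v ∈ derivedBag B W U T r β x ↔
      (v ∈ β x ∧ v ∈ W) ∨ ∃ u, u ∈ β x ∧ u ∈ U ∧ B.Adj u v ∧ v ∈ gammaSet T r β x := by
  simp only [derivedBag, Set.mem_union, Set.mem_iUnion, Set.mem_inter_iff,
    SimpleGraph.mem_neighborSet, exists_prop]
  tauto

end Aux

/-- at an introduce(s) node `t` (for a special vertex `s ∈ U`)
with unique child `t'`, `Original(t) = Original(t')` and `Fake(t) = Fake(t')`. -/
theorem stmt_2 {V : Type*} {ι : Type*} (B : SimpleGraph V) (W U : Set V)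
    (hbip : IsBipartition B W U)
    (T : SimpleGraph ι) (r : ι) (hT : T.IsTree) (β : ι → Set V)
    (hD : IsTreeDecompOn B Set.univ T β) (hnice : IsNice T r β)
    (s : V) (hsU : s ∈ U) (t t' : ι)
    (ht : IsIntroduceNode T r β s t) (ht' : IsChild T r t t') :
    originalSet B W U T r β t = originalSet B W U T r β t' ∧
      fakeSet B W U T r β t = fakeSet B W U T r β t' := by
  classical
  obtain ⟨hcov, hdisj, hadjbip⟩ := hbip
  obtain ⟨t₀, hchild₀, huniq₀, hsβt, hβeq₀⟩ := ht
  have huniq : ∀ u, IsChild T r t u → u = t' :=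
    fun u h => (huniq₀ u h).trans (huniq₀ t' ht').symm
  have hβeq : β t \ {s} = β t' := by rw [hβeq₀, ← huniq₀ t' ht']
  have hsW : s ∉ W := fun h => hdisj s ⟨h, hsU⟩
  have hsβt' : s ∉ β t' := by rw [← hβeq]; simp
  have hβt : β t = insert s (β t') := by
    ext x
    constructor
    · intro hx
      by_cases hxs : x = s
      · exact Or.inl hxs
      · exact Or.inr (hβeq ▸ ⟨hx, hxs⟩)
    · rintro (rfl | hx)
      · exact hsβt
      · exact (Set.diff_subset (t := {s})) (hβeq ▸ hx : x ∈ β t \ {s})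
  have neighbor_W : ∀ u v, u ∈ U → B.Adj u v → v ∈ W := by
    intro u v hu h
    rcases hadjbip h with ⟨h1, _⟩ | ⟨_, h2⟩
    · exact absurd ⟨h1, hu⟩ (hdisj u)
    · exact h2
  have hnadjUU : ∀ u v, u ∈ U → v ∈ U → ¬ B.Adj u v := by
    intro u v hu hv h
    rcases hadjbip h with ⟨h1, _⟩ | ⟨_, h2⟩
    · exact hdisj u ⟨h1, hu⟩
    · exact hdisj v ⟨h2, hv⟩
  have hndesc : ¬ Desc T r t' t := fun h =>
    ht'.1.ne (desc_antisymm' hT ht'.2 h)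
  have noS : ∀ t₀, Desc T r t' t₀ → s ∉ β t₀ := by
    intro x hd hs₀
    obtain ⟨w, hw⟩ := exists_walk_in_bags' hD s hs₀ hsβt
    exact hsβt' (hw t' (sep' hd hndesc w))
  have key : ∀ v, B.Adj s v → v ∈ gammaSet T r β t' → v ∈ β t' := by
    intro v hadj hγ
    simp only [gammaSet, Set.mem_iUnion, Set.mem_setOf_eq, exists_prop] at hγ
    obtain ⟨t₁, hd1, hv1⟩ := hγ
    obtain ⟨t₂, hs₂, hv₂⟩ := hD.edge_mem hadj
    have hnd₂ : ¬ Desc T r t' t₂ := fun h => noS t₂ h hs₂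
    obtain ⟨w, hw⟩ := exists_walk_in_bags' hD v hv1 hv₂
    exact hw t' (sep' hd1 hnd₂ w)
  have hβt'γ : β t' ⊆ gammaSet T r β t' := by
    intro v hv
    simp only [gammaSet, Set.mem_iUnion, Set.mem_setOf_eq, exists_prop]
    exact ⟨t', desc_refl', hv⟩
  have gamma_eq : gammaSet T r β t = β t ∪ gammaSet T r β t' := by
    ext v
    simp only [gammaSet, Set.mem_iUnion, Set.mem_setOf_eq, Set.mem_union, exists_prop]
    constructor
    · rintro ⟨x, hdx, hvx⟩
      rcases desc_cases' hT huniq hdx with rfl | hd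
      · exact Or.inl hvx
      · exact Or.inr ⟨x, hd, hvx⟩
    · rintro (hv | ⟨x, hdx, hvx⟩)
      · exact ⟨t, desc_refl', hv⟩
      · exact ⟨x, desc_trans' ht'.2 hdx, hvx⟩
  have s_not_derived : s ∉ derivedBag B W U T r β t' := by
    rw [mem_derivedBag']
    rintro (⟨-, hW⟩ | ⟨u, -, huU, hadj, -⟩)
    · exact hsW hW
    · exact hnadjUU u s huU hsU hadj
  have main : derivedBag B W U T r β t = derivedBag B W U T r β t' := by
    apply Set.Subset.antisymm
    · intro v hv
      rw [mem_derivedBag'] at hv ⊢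
      rcases hv with ⟨hvβ, hvW⟩ | ⟨u, huβ, huU, hadj, hvγ⟩
      · left
        refine ⟨?_, hvW⟩
        rw [hβt] at hvβ
        rcases hvβ with rfl | hvβ
        · exact absurd hvW hsW
        · exact hvβ
      · have hvW : v ∈ W := neighbor_W u v huU hadj
        have hvs : v ≠ s := fun h => hsW (h ▸ hvW)
        have hvβ' : v ∈ gammaSet T r β t' ∨ v ∈ β t' := by
          rw [gamma_eq] at hvγ
          rcases hvγ with h | h
          · right
            rw [hβt] at h
            rcases h with rfl | h
            · exact absurd hvW hsW
            · exact h
          · exact Or.inl h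
        by_cases hus : u = s
        · subst hus
          rcases hvβ' with hγ' | hβ'
          · exact Or.inl ⟨key v hadj hγ', hvW⟩
          · exact Or.inl ⟨hβ', hvW⟩
        · have huβ' : u ∈ β t' := by
            rw [hβt] at huβ
            rcases huβ with rfl | huβ
            · exact absurd rfl hus
            · exact huβ
          rcases hvβ' with hγ' | hβ'
          · exact Or.inr ⟨u, huβ', huU, hadj, hγ'⟩
          · exact Or.inr ⟨u, huβ', huU, hadj, hβt'γ hβ'⟩
    · intro v hv
      rw [mem_derivedBag'] at hv ⊢
      have hsub : β t' ⊆ β t := by rw [hβt]; exact Set.subset_insert _ _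
      rcases hv with ⟨hvβ, hvW⟩ | ⟨u, huβ, huU, hadj, hvγ⟩
      · exact Or.inl ⟨hsub hvβ, hvW⟩
      · refine Or.inr ⟨u, hsub huβ, huU, hadj, ?_⟩
        rw [gamma_eq]
        exact Or.inr hvγ
  constructor
  · unfold originalSet
    rw [main, hβt, Set.insert_inter_of_notMem s_not_derived]
  · unfold fakeSet
    rw [main, hβt]
    ext v
    simp only [Set.mem_diff, Set.mem_insert_iff, not_or]
    constructor
    · rintro ⟨hd, -, hβ⟩
      exact ⟨hd, hβ⟩
    · rintro ⟨hd, hβ⟩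
      exact ⟨hd, fun h => s_not_derived (h ▸ hd), hβ⟩
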